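/- Let H be a real Hilbert space, A, B bounded self-adjoint nonnegative operators, λ > 0. Then the adjoint of I + λAB is I + λBA, and its kernel is trivial; consequently (by the closed range theorem) R(I + λAB) = N(I + λBA)^⊥ = H. -/

import Mathlib

open ContinuousLinearMap

/-- Cauchy–Schwarz for the nonnegative form associated to a nonnegative
self-adjoint operator: `‖A v‖² ≤ ‖A‖ ⟪A v, v⟫`. -/
private lemma aux_cs {H : Type*} [NormedAddCommGroup H] [InnerProductSpace ℝ H] [CompleteSpace H]
    (A : H →L[ℝ] H) (hA : IsSelfAdjoint A)
    (hApos : ∀ u : H, 0 ≤ (inner ℝ (A u) u : ℝ)) (v : H) :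
    ‖A v‖ ^ 2 ≤ ‖A‖ * (inner ℝ (A v) v : ℝ) := by
  rcases eq_or_ne (A v) 0 with h0 | h0
  · have : (0:ℝ) ≤ ‖A‖ * inner ℝ (A v) v := mul_nonneg (norm_nonneg _) (hApos v)
    simpa [h0] using this
  have hsym := hA.isSymmetric
  set a : ℝ := inner ℝ (A (A v)) (A v) with ha
  set c : ℝ := inner ℝ (A v) v with hc
  have hq : ∀ t : ℝ, 0 ≤ a * (t * t) + (2 * ‖A v‖ ^ 2) * t + c := by
    intro t
    have hp := hApos (v + t • A v)
    have hexp : (inner ℝ (A (v + t • A v)) (v + t • A v) : ℝ)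
        = a * (t * t) + (2 * ‖A v‖ ^ 2) * t + c := by
      have hAAv : (inner ℝ (A (A v)) v : ℝ) = inner ℝ (A v) (A v) := hsym (A v) v
      have hnorm : (inner ℝ (A v) (A v) : ℝ) = ‖A v‖ ^ 2 :=
        real_inner_self_eq_norm_sq (A v)
      simp only [map_add, map_smul, inner_add_left, inner_add_right,
        real_inner_smul_left, real_inner_smul_right, hAAv, hnorm, ← ha, ← hc]
      ring
    linarith [hexp ▸ hp]
  have hd := discrim_le_zero hq
  have hdisc : (2 * ‖A v‖ ^ 2) ^ 2 - 4 * a * c ≤ 0 := by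
    simpa [discrim] using hd
  have hc0 : 0 ≤ c := hApos v
  have haub : a ≤ ‖A‖ * ‖A v‖ ^ 2 := by
    calc a ≤ ‖A (A v)‖ * ‖A v‖ := real_inner_le_norm _ _
      _ ≤ (‖A‖ * ‖A v‖) * ‖A v‖ :=
        mul_le_mul_of_nonneg_right (A.le_opNorm (A v)) (norm_nonneg _)
      _ = ‖A‖ * ‖A v‖ ^ 2 := by ring
  have hAv : 0 < ‖A v‖ ^ 2 := by
    have : 0 < ‖A v‖ := norm_pos_iff.mpr h0
    positivity
  nlinarith [mul_le_mul_of_nonneg_right haub hc0, sq_nonneg (‖A v‖)]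

/-- Quantitative lower bound: `‖u‖ ≤ (2 + l‖A‖‖B‖) ‖(1 + l A B) u‖`. -/
private lemma aux_bound {H : Type*} [NormedAddCommGroup H] [InnerProductSpace ℝ H] [CompleteSpace H]
    (A B : H →L[ℝ] H) (hA : IsSelfAdjoint A)
    (hApos : ∀ u : H, 0 ≤ (inner ℝ (A u) u : ℝ))
    (hBpos : ∀ u : H, 0 ≤ (inner ℝ (B u) u : ℝ))
    (l : ℝ) (hl : 0 < l) (u : H) :
    ‖u‖ ≤ (2 + l * ‖A‖ * ‖B‖) * ‖(1 + l • (A ∘L B)) u‖ := by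
  set f : H := (1 + l • (A ∘L B)) u with hf
  have hfu : f = u + l • A (B u) := by
    simp [hf, ContinuousLinearMap.add_apply, ContinuousLinearMap.smul_apply]
  have h1 : (inner ℝ f (B u) : ℝ) = inner ℝ u (B u) + l * inner ℝ (A (B u)) (B u) := by
    rw [hfu]; simp [inner_add_left, real_inner_smul_left]
  have hub : (0:ℝ) ≤ inner ℝ u (B u) := by rw [real_inner_comm]; exact hBpos u
  have hab : (0:ℝ) ≤ inner ℝ (A (B u)) (B u) := hApos (B u)
  have hfB : (inner ℝ f (B u) : ℝ) ≤ ‖f‖ * (‖B‖ * ‖u‖) := by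
    calc (inner ℝ f (B u) : ℝ) ≤ ‖f‖ * ‖B u‖ := real_inner_le_norm _ _
      _ ≤ ‖f‖ * (‖B‖ * ‖u‖) :=
        mul_le_mul_of_nonneg_left (B.le_opNorm u) (norm_nonneg _)
  have h2 : l * inner ℝ (A (B u)) (B u) ≤ ‖f‖ * (‖B‖ * ‖u‖) := by linarith
  have h3 : ‖A (B u)‖ ^ 2 ≤ ‖A‖ * inner ℝ (A (B u)) (B u) := aux_cs A hA hApos (B u)
  have h4 : (l * ‖A (B u)‖) ^ 2 ≤ (l * ‖A‖ * ‖B‖) * (‖f‖ * ‖u‖) := by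
    have hAn : (0:ℝ) ≤ ‖A‖ := norm_nonneg _
    nlinarith [mul_le_mul_of_nonneg_left h2 hAn, mul_le_mul_of_nonneg_left h3 (le_of_lt hl),
      mul_le_mul_of_nonneg_left
        (mul_le_mul_of_nonneg_left h3 (le_of_lt hl)) (le_of_lt hl)]
  have h5 : ‖u‖ ≤ ‖f‖ + l * ‖A (B u)‖ := by
    have : u = f - l • A (B u) := by rw [hfu]; abel
    calc ‖u‖ = ‖f - l • A (B u)‖ := by rw [← this]
      _ ≤ ‖f‖ + ‖l • A (B u)‖ := norm_sub_le _ _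
      _ = ‖f‖ + l * ‖A (B u)‖ := by rw [norm_smul, Real.norm_eq_abs, abs_of_pos hl]
  have hK : (0:ℝ) ≤ l * ‖A‖ * ‖B‖ := by positivity
  have hx : (0:ℝ) ≤ l * ‖A (B u)‖ := by positivity
  have hfn : (0:ℝ) ≤ ‖f‖ := norm_nonneg _
  have hun : (0:ℝ) ≤ ‖u‖ := norm_nonneg _
  nlinarith [sq_nonneg (l * ‖A (B u)‖ - (l * ‖A‖ * ‖B‖) * ‖f‖ - ‖f‖),
    sq_nonneg (‖u‖ - ‖f‖ - l * ‖A (B u)‖), mul_nonneg hK hfn,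
    mul_nonneg (mul_nonneg hK hK) (mul_nonneg hfn hfn)]

theorem adjoint_and_surjectivity_of_id_add_smul_AB
    {H : Type*} [NormedAddCommGroup H] [InnerProductSpace ℝ H] [CompleteSpace H]
    (A B : H →L[ℝ] H) (hA : IsSelfAdjoint A) (hB : IsSelfAdjoint B)
    (hApos : ∀ u : H, 0 ≤ (inner ℝ (A u) u : ℝ))
    (hBpos : ∀ u : H, 0 ≤ (inner ℝ (B u) u : ℝ))
    (l : ℝ) (hl : 0 < l) :
    ContinuousLinearMap.adjoint (1 + l • (A ∘L B)) = 1 + l • (B ∘L A) ∧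
    (∀ u : H, (1 + l • (B ∘L A)) u = 0 → u = 0) ∧
    Function.Surjective (1 + l • (A ∘L B) : H →L[ℝ] H) := by
  have hadj : ContinuousLinearMap.adjoint (1 + l • (A ∘L B)) = 1 + l • (B ∘L A) := by
    have h1 : ContinuousLinearMap.adjoint (1 : H →L[ℝ] H) = 1 :=
      ContinuousLinearMap.adjoint_id
    rw [map_add, h1, map_smulₛₗ, ContinuousLinearMap.adjoint_comp,
      hA.adjoint_eq, hB.adjoint_eq]
    simp
  have hker : ∀ u : H, (1 + l • (B ∘L A)) u = 0 → u = 0 := by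
    intro u hu
    have := aux_bound B A hB hBpos hApos l hl u
    rw [hu] at this
    simpa using le_antisymm (by simpa using this) (norm_nonneg u)
  refine ⟨hadj, hker, ?_⟩
  set T : H →L[ℝ] H := 1 + l • (A ∘L B) with hT
  have hbdd : ∀ u : H, ‖u‖ ≤ (2 + l * ‖A‖ * ‖B‖) * ‖T u‖ :=
    aux_bound A B hA hApos hBpos l hl
  have hanti : AntilipschitzWith (⟨2 + l * ‖A‖ * ‖B‖, by positivity⟩ : NNReal) T :=
    T.antilipschitz_of_bound hbdd
  have hdense : (LinearMap.range (T : H →ₗ[ℝ] H)).topologicalClosure = ⊤ := by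
    rw [Submodule.topologicalClosure_eq_top_iff, Submodule.eq_bot_iff]
    intro x hx
    have hTx : ContinuousLinearMap.adjoint T x = 0 := by
      apply ext_inner_left ℝ
      intro v
      rw [ContinuousLinearMap.adjoint_inner_right]
      simpa using hx (T v) (LinearMap.mem_range_self _ v)
    rw [hT, hadj] at hTx
    exact hker x hTx
  exact ((T.bijective_iff_dense_range_and_antilipschitz).mpr
    ⟨hdense, ⟨_, hanti⟩⟩).surjective
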